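/- Diagonal product evaluation: for all nonnegative integers i, j, k and integer L with L ≥ max(i+j, j+k, k+i), ∑_{s≥0} q^{s(L+2)-T_s+T_{i-s}+T_{j-s}+T_{k-s}} [L-s choose s, i-s, j-s]_q [L-i-j choose k-s]_q = q^{T_i+T_j+T_k} [L-k choose i]_q [L-i choose j]_q [L-j choose k]_q. -/

import Mathlib

open Finset

noncomputable section

abbrev K : Type := RatFunc ℚ

def q : K := RatFunc.X

/-- Extended q-Pochhammer symbol `(a;q)_n` for integer `n`. -/
def poch (a : K) (n : ℤ) : K :=
  if 0 ≤ n then ∏ j ∈ Finset.range n.toNat, (1 - a * q ^ j)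
  else (∏ j ∈ Finset.range (-n).toNat, (1 - a * q ^ (-(j + 1 : ℤ))))⁻¹

/-- Extended Gaussian binomial coefficient `[n choose m]_q`. -/
def qbinom (n m : ℤ) : K :=
  if 0 ≤ m then poch (q ^ (n - m + 1)) m / poch q m else 0

/-- Triangular number `T_n = n(n+1)/2`. -/
def T (n : ℤ) : ℤ := n * (n + 1) / 2

/-- The q-multinomial coefficient `[L choose a,b,c]_q`. -/
def qmul3 (L a b c : ℤ) : K := qbinom L a * qbinom (L - a) b * qbinom (L - a - b) c


lemma q_ne_zero : q ≠ 0 := RatFunc.X_ne_zero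

lemma q_pow_ne_one (n : ℕ) (hn : n ≠ 0) : q ^ n ≠ 1 := by
  intro h
  have h2 : algebraMap (Polynomial ℚ) K (Polynomial.X ^ n) = algebraMap (Polynomial ℚ) K 1 := by
    rw [map_pow, RatFunc.algebraMap_X, map_one]
    show q ^ n = 1
    exact h
  have h3 := RatFunc.algebraMap_injective ℚ h2
  have h4 := congrArg (Polynomial.eval 0) h3
  simp [zero_pow hn] at h4

lemma one_sub_q_zpow_ne_zero (m : ℤ) (hm : m ≠ 0) : 1 - q ^ m ≠ 0 := by
  intro h
  have h1 : q ^ m = 1 := by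
    have := sub_eq_zero.mp h; exact this.symm
  rcases lt_trichotomy m 0 with hlt | heq | hgt
  · have h2 : q ^ (-m) = 1 := by
      rw [zpow_neg, h1, inv_one]
    have h3 : q ^ (-m).toNat = (1 : K) := by
      rw [← zpow_natCast, Int.toNat_of_nonneg (by omega)]; exact h2
    exact q_pow_ne_one _ (by omega) h3
  · exact hm heq
  · have h3 : q ^ m.toNat = (1 : K) := by
      rw [← zpow_natCast, Int.toNat_of_nonneg (by omega)]; exact h1
    exact q_pow_ne_one _ (by omega) h3

/-- `zpoch c m = ∏_{t<m} (1 - q^(c+t))`. -/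
def zpoch (c : ℤ) (m : ℕ) : K := ∏ t ∈ Finset.range m, (1 - q ^ (c + t))

lemma zpoch_zero (c : ℤ) : zpoch c 0 = 1 := by simp [zpoch]

lemma zpoch_succ (c : ℤ) (m : ℕ) : zpoch c (m + 1) = zpoch c m * (1 - q ^ (c + m)) := by
  simp [zpoch, Finset.prod_range_succ]

lemma zpoch_succ' (c : ℤ) (m : ℕ) : zpoch c (m + 1) = (1 - q ^ c) * zpoch (c + 1) m := by
  rw [zpoch, Finset.prod_range_succ', mul_comm]
  congr 1
  · simp
  · rw [zpoch]
    apply Finset.prod_congr rfl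
    intro t _
    congr 2
    push_cast
    ring

lemma zpoch_add (c : ℤ) (m n : ℕ) :
    zpoch c (m + n) = zpoch c m * zpoch (c + m) n := by
  rw [zpoch, Finset.prod_range_add]
  congr 1
  apply Finset.prod_congr rfl
  intro t _
  congr 2
  push_cast
  ring

lemma zpoch_ne_zero (c : ℤ) (hc : 0 < c) (m : ℕ) : zpoch c m ≠ 0 := by
  rw [zpoch]
  apply Finset.prod_ne_zero_iff.mpr
  intro t _
  exact one_sub_q_zpow_ne_zero _ (by omega)

lemma qbinom_eq (n : ℤ) (m : ℕ) :
    qbinom n m = zpoch (n - m + 1) m / zpoch 1 m := by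
  rw [qbinom, if_pos (by positivity)]
  congr 1
  · rw [poch, if_pos (by positivity), zpoch]
    simp only [Int.toNat_natCast]
    apply Finset.prod_congr rfl
    intro t _
    congr 1
    rw [← zpow_natCast q t, ← zpow_add₀ q_ne_zero]
  · rw [poch, if_pos (by positivity), zpoch]
    simp only [Int.toNat_natCast]
    apply Finset.prod_congr rfl
    intro t _
    congr 1
    rw [zpow_add₀ q_ne_zero, zpow_one, zpow_natCast]

lemma qbinom_neg (n m : ℤ) (hm : m < 0) : qbinom n m = 0 := by
  rw [qbinom, if_neg (by omega)]

lemma qbinom_zero (n : ℤ) : qbinom n 0 = 1 := by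
  have := qbinom_eq n 0
  simpa [zpoch_zero] using this

lemma F_ne_zero (m : ℕ) : zpoch 1 m ≠ 0 := zpoch_ne_zero 1 one_pos m

/-- Lower-index shift: `[n, m+1] (1-q^{m+1}) = [n, m] (1-q^{n-m})`. -/
lemma R1 (n m : ℤ) : qbinom n (m + 1) * (1 - q ^ (m + 1)) = qbinom n m * (1 - q ^ (n - m)) := by
  rcases le_or_gt 0 m with hm | hm
  · lift m to ℕ using hm
    have e1 : (m : ℤ) + 1 = ((m + 1 : ℕ) : ℤ) := by push_cast; ring
    rw [e1, qbinom_eq n (m + 1), qbinom_eq n m]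
    have e2 : n - ((m + 1 : ℕ) : ℤ) + 1 = n - m := by push_cast; omega
    rw [e2]
    have e3 : zpoch (n - m) (m + 1) = (1 - q ^ (n - m)) * zpoch (n - m + 1) m := by
      have := zpoch_succ' (n - m) m
      simpa using this
    have e4 : zpoch 1 (m + 1) = zpoch 1 m * (1 - q ^ ((m:ℤ) + 1)) := by
      rw [zpoch_succ 1 m, show (1:ℤ) + (m:ℤ) = (m:ℤ) + 1 from by ring]
    rw [e3, e4]
    have h1 : (1 - q ^ ((m:ℤ) + 1)) ≠ 0 := one_sub_q_zpow_ne_zero _ (by omega)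
    rw [div_mul_eq_mul_div, ← e1, mul_div_mul_right _ _ h1]
    ring
  · rcases eq_or_lt_of_le (by omega : m + 1 ≤ 0) with heq | hlt
    · have hm1 : m = -1 := by omega
      subst hm1
      rw [show (-1 : ℤ) + 1 = 0 from by norm_num, qbinom_neg n (-1) (by omega), qbinom_zero]
      norm_num
    · rw [qbinom_neg n (m+1) (by omega), qbinom_neg n m (by omega)]
      ring

/-- Upper-index shift: `[n+1, m] (1-q^{n+1-m}) = [n, m] (1-q^{n+1})`. -/
lemma R2 (n m : ℤ) : qbinom (n + 1) m * (1 - q ^ (n + 1 - m)) = qbinom n m * (1 - q ^ (n + 1)) := by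
  rcases le_or_gt 0 m with hm | hm
  · lift m to ℕ using hm
    rw [qbinom_eq (n+1) m, qbinom_eq n m]
    have key : zpoch (n + 1 - m + 1) m * (1 - q ^ (n + 1 - (m:ℤ))) =
        zpoch (n - m + 1) m * (1 - q ^ (n + 1)) := by
      have h1 : zpoch (n - m + 1) (m + 1) = (1 - q ^ (n - (m:ℤ) + 1)) * zpoch (n - m + 2) m := by
        rw [zpoch_succ' (n - m + 1) m, show n - (m:ℤ) + 1 + 1 = n - m + 2 from by ring]
      have h2 : zpoch (n - m + 1) (m + 1) = zpoch (n - m + 1) m * (1 - q ^ (n + 1)) := by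
        rw [zpoch_succ (n - m + 1) m, show n - (m:ℤ) + 1 + (m:ℤ) = n + 1 from by ring]
      have e5 : n + 1 - (m:ℤ) + 1 = n - m + 2 := by omega
      have e6 : n + 1 - (m:ℤ) = n - m + 1 := by omega
      rw [e5, e6, mul_comm, ← h1, h2]
    rw [div_mul_eq_mul_div, div_mul_eq_mul_div, key]
  · rw [qbinom_neg _ m (by omega), qbinom_neg _ m (by omega)]
    ring

lemma Tsucc (m : ℤ) : T (m + 1) = T m + (m + 1) := by
  have h : (m + 1) * (m + 1 + 1) = m * (m + 1) + (m + 1) * 2 := by ring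
  rw [T, T, h, Int.add_mul_ediv_right _ _ (by norm_num : (2:ℤ) ≠ 0)]

lemma T_zero : T 0 = 0 := by decide

lemma zpoch_one (c : ℤ) : zpoch c 1 = 1 - q ^ c := by simp [zpoch]

/-- The key product shift relation for `P(s) = qmul3 (L-s) s (i-s) (j-s)`. -/
lemma RP (i j : ℕ) (L : ℤ) (s : ℕ) :
    qmul3 (L - ↑(s+1)) ↑(s+1) (↑i - ↑(s+1)) (↑j - ↑(s+1)) *
      ((1 - q ^ ((↑(s+1) : ℤ))) * (1 - q ^ (L - ↑s))) =
    qmul3 (L - ↑s) ↑s ((i:ℤ) - ↑s) ((j:ℤ) - ↑s) *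
      ((1 - q ^ ((i:ℤ) - ↑s)) * (1 - q ^ ((j:ℤ) - ↑s))) := by
  rw [qmul3, qmul3]
  by_cases hsj : s < j
  · by_cases hsi : s < i
    · -- main case
      have hbi : ((i:ℤ) - ↑(s+1)) = ((i - (s+1) : ℕ) : ℤ) := by push_cast; omega
      have hbj : ((j:ℤ) - ↑(s+1)) = ((j - (s+1) : ℕ) : ℤ) := by push_cast; omega
      have hbi2 : ((i:ℤ) - ↑s) = ((i - s : ℕ) : ℤ) := by push_cast; omega
      have hbj2 : ((j:ℤ) - ↑s) = ((j - s : ℕ) : ℤ) := by push_cast; omega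
      rw [hbi, hbj, hbi2, hbj2]
      rw [qbinom_eq (L - ↑(s+1)) (s+1), qbinom_eq (L - ↑s) s,
        qbinom_eq _ (i - (s+1)), qbinom_eq _ (j - (s+1)),
        qbinom_eq _ (i - s), qbinom_eq _ (j - s)]
      -- normalize the zpoch first arguments
      have ha1 : L - ↑(s+1) - ↑(s+1) + 1 = L - 2*(s:ℤ) - 1 := by push_cast; ring
      have ha2 : L - ↑(s+1) - ↑(s+1) - ((i - (s+1) : ℕ) : ℤ) + 1 = L - s - i := by
        push_cast; omega
      have ha3 : L - ↑(s+1) - ↑(s+1) - ((i - (s+1) : ℕ):ℤ) - ((j - (s+1) : ℕ):ℤ) + 1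
          = L - i - j + 1 := by push_cast; omega
      have ha4 : L - ↑s - ↑s + 1 = L - 2*(s:ℤ) + 1 := by ring
      have ha5 : L - ↑s - ↑s - ((i - s : ℕ) : ℤ) + 1 = L - s - i + 1 := by push_cast; omega
      have ha6 : L - ↑s - ↑s - ((i - s : ℕ):ℤ) - ((j - s : ℕ):ℤ) + 1 = L - i - j + 1 := by
        push_cast; omega
      rw [ha1, ha2, ha3, ha4, ha5, ha6]
      -- numerator identity
      have splitL : zpoch (L - i - j + 1) ((j - (s+1)) + ((i - (s+1)) + ((s+1) + 1))) =
          zpoch (L - i - j + 1) (j - (s+1)) * (zpoch (L - s - i) (i - (s+1)) *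
            (zpoch (L - 2*(s:ℤ) - 1) (s+1) * (1 - q ^ (L - ↑s)))) := by
        rw [zpoch_add,
          show L - ↑i - ↑j + 1 + ((j - (s+1) : ℕ) : ℤ) = L - ↑s - ↑i from by omega,
          zpoch_add,
          show L - ↑s - ↑i + ((i - (s+1) : ℕ) : ℤ) = L - 2*(s:ℤ) - 1 from by omega,
          zpoch_add,
          show L - 2*(s:ℤ) - 1 + ((s+1 : ℕ) : ℤ) = L - ↑s from by omega,
          zpoch_one]
      have splitR : zpoch (L - i - j + 1) ((j - s) + ((i - s) + s)) =
          zpoch (L - i - j + 1) (j - s) * (zpoch (L - s - i + 1) (i - s) *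
            zpoch (L - 2*(s:ℤ) + 1) s) := by
        rw [zpoch_add,
          show L - ↑i - ↑j + 1 + ((j - s : ℕ) : ℤ) = L - ↑s - ↑i + 1 from by omega,
          zpoch_add,
          show L - ↑s - ↑i + 1 + ((i - s : ℕ) : ℤ) = L - 2*(s:ℤ) + 1 from by omega]
      have elen : (j - (s+1)) + ((i - (s+1)) + ((s+1) + 1)) = (j - s) + ((i - s) + s) := by
        omega
      rw [elen] at splitL
      have NL : zpoch (L - 2*(s:ℤ) - 1) (s+1) * zpoch (L - s - i) (i - (s+1)) *
            zpoch (L - i - j + 1) (j - (s+1)) * (1 - q ^ (L - ↑s)) =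
          zpoch (L - 2*(s:ℤ) + 1) s * zpoch (L - s - i + 1) (i - s) *
            zpoch (L - i - j + 1) (j - s) := by
        linear_combination splitR - splitL
      -- denominator relations
      have hd1 : zpoch 1 (s+1) = zpoch 1 s * (1 - q ^ ((↑(s+1)) : ℤ)) := by
        rw [zpoch_succ, show (1 : ℤ) + (s:ℕ) = ((s+1 : ℕ) : ℤ) from by push_cast; ring]
      have hd2 : zpoch 1 (i - s) = zpoch 1 (i - (s+1)) * (1 - q ^ (((i - s : ℕ)) : ℤ)) := by
        rw [show i - s = (i - (s+1)) + 1 from by omega, zpoch_succ,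
          show (1 : ℤ) + ((i - (s+1) : ℕ) : ℤ) = (((i - s :ℕ)) : ℤ) from by omega,
          show (i - (s+1)) + 1 = i - s from by omega]
      have hd3 : zpoch 1 (j - s) = zpoch 1 (j - (s+1)) * (1 - q ^ (((j - s : ℕ)) : ℤ)) := by
        rw [show j - s = (j - (s+1)) + 1 from by omega, zpoch_succ,
          show (1 : ℤ) + ((j - (s+1) : ℕ) : ℤ) = (((j - s :ℕ)) : ℤ) from by omega,
          show (j - (s+1)) + 1 = j - s from by omega]
      rw [hd1, hd2, hd3]
      have n1 := F_ne_zero s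
      have n2 := F_ne_zero (i - (s+1))
      have n3 := F_ne_zero (j - (s+1))
      have n4 : (1 - q ^ ((↑(s+1):ℤ))) ≠ 0 := one_sub_q_zpow_ne_zero _ (by push_cast; omega)
      have n5 : (1 - q ^ (((i - s : ℕ)) : ℤ)) ≠ 0 := one_sub_q_zpow_ne_zero _ (by omega)
      have n6 : (1 - q ^ (((j - s : ℕ)) : ℤ)) ≠ 0 := one_sub_q_zpow_ne_zero _ (by omega)
      rw [div_mul_div_comm, div_mul_div_comm, div_mul_div_comm, div_mul_div_comm,
        div_mul_eq_mul_div, div_mul_eq_mul_div, div_eq_div_iff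
          (mul_ne_zero (mul_ne_zero (mul_ne_zero n1 n4) n2) n3)
          (mul_ne_zero (mul_ne_zero n1 (mul_ne_zero n2 n5)) (mul_ne_zero n3 n6))]
      linear_combination (zpoch 1 s * zpoch 1 (i - (s+1)) * zpoch 1 (j - (s+1)) *
        (1 - q ^ ((↑(s+1):ℤ))) * (1 - q ^ (((i - s : ℕ)):ℤ)) * (1 - q ^ (((j - s:ℕ)):ℤ))) * NL
    · -- i ≤ s
      have hLz : qbinom (L - ↑(s+1) - ↑(s+1)) ((i:ℤ) - ↑(s+1)) = 0 :=
        qbinom_neg _ _ (by push_cast; omega)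
      rw [hLz]
      rcases eq_or_lt_of_le (by omega : i ≤ s) with hie | hlt
      · rw [show (1 - q ^ ((i:ℤ) - ↑s)) = 0 from by rw [← hie]; simp]
        ring
      · rw [qbinom_neg (L - ↑s - ↑s) ((i:ℤ) - ↑s) (by omega)]
        ring
  · -- j ≤ s
    have hLz : qbinom (L - ↑(s+1) - ↑(s+1) - ((i:ℤ) - ↑(s+1))) ((j:ℤ) - ↑(s+1)) = 0 :=
      qbinom_neg _ _ (by push_cast; omega)
    rw [hLz]
    rcases eq_or_lt_of_le (by omega : j ≤ s) with hje | hlt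
    · rw [show (1 - q ^ ((j:ℤ) - ↑s)) = 0 from by rw [← hje]; simp]
      ring
    · rw [qbinom_neg (L - ↑s - ↑s - ((i:ℤ) - ↑s)) ((j:ℤ) - ↑s) (by omega)]
      ring

def Ee (i j k : ℕ) (L : ℤ) (s : ℕ) : ℤ :=
  (s:ℤ) * (L + 2) - T s + T ((i:ℤ) - s) + T ((j:ℤ) - s) + T ((k:ℤ) - s)

def Gb (i j k : ℕ) (L : ℤ) (s : ℕ) : K :=
  -(q ^ (Ee i j k L s + (k:ℤ) + 1 - s) * (1 - q ^ (s:ℤ)) * (1 - q ^ (L + 1 - s)) *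
    qmul3 (L - s) s ((i:ℤ) - s) ((j:ℤ) - s) * qbinom (L - i - j) ((k:ℤ) + 1 - s))

lemma hEk (i j k : ℕ) (L : ℤ) (s : ℕ) :
    Ee i j (k+1) L s = Ee i j k L s + ((k:ℤ) + 1 - s) := by
  unfold Ee
  rw [show ((k+1:ℕ):ℤ) - (s:ℤ) = ((k:ℤ) - s) + 1 from by push_cast; ring, Tsucc]
  push_cast
  ring

lemma hEs (i j k : ℕ) (L : ℤ) (s : ℕ) :
    Ee i j k L (s+1) = Ee i j k L s + (L + 1 + (s:ℤ) + s - i - j - k) := by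
  unfold Ee
  rw [show ((s+1:ℕ):ℤ) = (s:ℤ) + 1 from by push_cast; ring, Tsucc]
  have hI := Tsucc ((i:ℤ) - s - 1)
  have hJ := Tsucc ((j:ℤ) - s - 1)
  have hK := Tsucc ((k:ℤ) - s - 1)
  rw [show (i:ℤ) - ↑s - 1 + 1 = ↑i - ↑s from by ring] at hI
  rw [show (j:ℤ) - ↑s - 1 + 1 = ↑j - ↑s from by ring] at hJ
  rw [show (k:ℤ) - ↑s - 1 + 1 = ↑k - ↑s from by ring] at hK
  rw [show (i:ℤ) - (↑s + 1) = ↑i - ↑s - 1 from by ring,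
    show (j:ℤ) - (↑s + 1) = ↑j - ↑s - 1 from by ring,
    show (k:ℤ) - (↑s + 1) = ↑k - ↑s - 1 from by ring]
  linarith [hI, hJ, hK]

/-- The scalar (free) identity underlying the WZ certificate. -/
lemma scal (i j k s : ℕ) (L : ℤ) :
    (1 - q ^ (L - i - j - ((k:ℤ) - s))) * q ^ ((k:ℤ) + 1 - s) *
      ((1 - q ^ (L - k)) * (1 - q ^ ((k:ℤ) + 1)) - (1 - q ^ (s:ℤ)) * (1 - q ^ (L + 1 - s)))
    = (1 - q ^ ((k:ℤ) + 1 - s)) *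
      (q ^ ((k:ℤ) + 1) * ((1 - q ^ (L - k - i)) * (1 - q ^ (L - j - k)))
        - q ^ (L + 1 + (s:ℤ) - i - j) * ((1 - q ^ ((i:ℤ) - s)) * (1 - q ^ ((j:ℤ) - s)))) := by
  have h1 : q ^ ((k:ℤ)) ≠ 0 := zpow_ne_zero _ q_ne_zero
  have h2 : q ^ ((s:ℤ)) ≠ 0 := zpow_ne_zero _ q_ne_zero
  have h3 : q ^ ((i:ℤ)) ≠ 0 := zpow_ne_zero _ q_ne_zero
  have h4 : q ^ ((j:ℤ)) ≠ 0 := zpow_ne_zero _ q_ne_zero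
  have h5 : q ^ L ≠ 0 := zpow_ne_zero _ q_ne_zero
  rw [show L - ↑i - ↑j - ((k:ℤ) - ↑s) = L + ↑s - ↑i - ↑j - ↑k from by ring]
  simp only [zpow_add₀ q_ne_zero, zpow_sub₀ q_ne_zero, zpow_one]
  set a := q ^ ((s:ℤ)) with ha
  set A := q ^ ((i:ℤ)) with hA
  set B := q ^ ((j:ℤ)) with hBB
  set C := q ^ ((k:ℤ)) with hC
  set Y := q ^ L with hY
  clear_value a A B C Y
  field_simp
  ring

set_option maxHeartbeats 2000000 in
/-- The pointwise WZ identity. -/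
lemma WZ (i j k : ℕ) (L : ℤ) (s : ℕ) :
    (1 - q ^ (L - (k:ℤ))) * (1 - q ^ ((k:ℤ)+1)) *
      (q ^ (Ee i j (k+1) L s) * qmul3 (L - s) s ((i:ℤ) - s) ((j:ℤ) - s) *
        qbinom (L - i - j) (((k+1:ℕ):ℤ) - s))
    = q ^ ((k:ℤ)+1) * ((1 - q ^ (L - k - i)) * (1 - q ^ (L - j - k))) *
      (q ^ (Ee i j k L s) * qmul3 (L - s) s ((i:ℤ) - s) ((j:ℤ) - s) *
        qbinom (L - i - j) ((k:ℤ) - s))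
      + (Gb i j k L (s+1) - Gb i j k L s) := by
  have hq := q_ne_zero
  by_cases hks : (s:ℤ) = (k:ℤ) + 1
  · have hz1 : qbinom (L - i - j) ((k:ℤ) - s) = 0 := qbinom_neg _ _ (by omega)
    have hz2 : Gb i j k L (s+1) = 0 := by
      unfold Gb
      rw [qbinom_neg (L - i - j) ((k:ℤ) + 1 - ↑(s+1)) (by push_cast; omega)]
      ring
    rw [hz1, hz2]
    unfold Gb
    rw [hEk]
    rw [show (((k+1:ℕ)):ℤ) - (s:ℤ) = (k:ℤ) + 1 - s from by push_cast; ring]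
    rw [show Ee i j k L s + (k:ℤ) + 1 - ↑s = Ee i j k L s + ((k:ℤ) + 1 - ↑s) from by ring]
    rw [hks]
    rw [show (k:ℤ) + 1 - ((k:ℤ) + 1) = 0 from by ring]
    rw [add_zero, show L + 1 - ((k:ℤ) + 1) = L - (k:ℤ) from by ring]
    ring
  · have hM : (1 - q ^ ((k:ℤ) + 1 - s)) ≠ 0 := one_sub_q_zpow_ne_zero _ (by omega)
    apply mul_left_cancel₀ hM
    unfold Gb
    rw [hEk, hEs]
    rw [show (((k+1:ℕ)):ℤ) - (s:ℤ) = (k:ℤ) + 1 - s from by push_cast; ring]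
    rw [show (k:ℤ) + 1 - ((s+1:ℕ):ℤ) = (k:ℤ) - s from by push_cast; ring]
    rw [show L + 1 - ((s+1:ℕ):ℤ) = L - (s:ℤ) from by push_cast; ring]
    rw [show Ee i j k L s + (L + 1 + (s:ℤ) + s - i - j - k) + ↑k + 1 - ↑(s+1)
        = Ee i j k L s + (L + 1 + (s:ℤ) - i - j) from by push_cast; ring]
    rw [show Ee i j k L s + (k:ℤ) + 1 - ↑s = Ee i j k L s + ((k:ℤ) + 1 - ↑s) from by ring]
    have hB : qbinom (L - i - j) ((k:ℤ) + 1 - s) * (1 - q ^ ((k:ℤ) + 1 - s)) =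
        qbinom (L - i - j) ((k:ℤ) - s) * (1 - q ^ (L - i - j - ((k:ℤ) - s))) := by
      have h := R1 (L - i - j) ((k:ℤ) - s)
      rw [show (k:ℤ) - s + 1 = (k:ℤ) + 1 - s from by ring] at h
      exact h
    have hRP := RP i j L s
    have hscal := scal i j k s L
    push_cast at hB hRP hscal ⊢
    simp only [zpow_add₀ q_ne_zero, zpow_one] at hB hRP hscal ⊢
    linear_combination
      (q ^ (Ee i j k L s) * qmul3 (L - s) s ((i:ℤ) - s) ((j:ℤ) - s) * q ^ ((k:ℤ) + 1 - s) *
        ((1 - q ^ (L - (k:ℤ))) * (1 - q ^ ((k:ℤ)) * q) -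
          (1 - q ^ ((s:ℤ))) * (1 - q ^ (L + 1 - (s:ℤ))))) * hB
      + ((1 - q ^ ((k:ℤ) + 1 - s)) * q ^ (Ee i j k L s) * q ^ (L + 1 + (s:ℤ) - i - j) *
          qbinom (L - i - j) ((k:ℤ) - s)) * hRP
      + (q ^ (Ee i j k L s) * qmul3 (L - s) s ((i:ℤ) - s) ((j:ℤ) - s) *
          qbinom (L - i - j) ((k:ℤ) - s)) * hscal

lemma Gb_start (i j k : ℕ) (L : ℤ) : Gb i j k L 0 = 0 := by
  unfold Gb
  simp

lemma Gb_end (i j k : ℕ) (L : ℤ) : Gb i j k L (i+1) = 0 := by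
  unfold Gb qmul3
  rw [qbinom_neg (L - ↑(i+1) - ↑(i+1)) ((i:ℤ) - ↑(i+1)) (by push_cast; omega)]
  ring

lemma Rratio (i j k : ℕ) (L : ℤ) :
    q ^ ((k:ℤ)+1) * ((1 - q ^ (L - k - i)) * (1 - q ^ (L - j - k))) *
      (q ^ (T i + T j + T k) * qbinom (L - k) i * qbinom (L - i) j * qbinom (L - j) k)
    = (1 - q ^ (L - (k:ℤ))) * (1 - q ^ ((k:ℤ)+1)) *
      (q ^ (T (i:ℤ) + T (j:ℤ) + T ((k+1:ℕ):ℤ)) * qbinom (L - ((k+1:ℕ):ℤ)) i *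
        qbinom (L - i) j * qbinom (L - j) ((k+1:ℕ):ℤ)) := by
  have hA : qbinom (L - ↑k) ↑i * (1 - q ^ (L - ↑k - ↑i)) =
      qbinom (L - ↑k - 1) ↑i * (1 - q ^ (L - (k:ℤ))) := by
    have h := R2 (L - ↑k - 1) ↑i
    rw [show L - (k:ℤ) - 1 + 1 = L - ↑k from by ring] at h
    exact h
  have hB2 : qbinom (L - ↑j) ((k:ℤ)+1) * (1 - q ^ ((k:ℤ)+1)) =
      qbinom (L - ↑j) ↑k * (1 - q ^ (L - ↑j - ↑k)) := by
    have h := R1 (L - ↑j) (k:ℤ)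
    exact h
  rw [show ((k+1:ℕ):ℤ) = (k:ℤ) + 1 from by push_cast; ring]
  rw [show L - ((k:ℤ) + 1) = L - ↑k - 1 from by ring]
  rw [Tsucc (k:ℤ)]
  simp only [zpow_add₀ q_ne_zero, zpow_one] at hB2 ⊢
  linear_combination
    (q ^ (k:ℤ) * q * (1 - q ^ (L - ↑j - ↑k)) * q ^ (T (i:ℤ)) * q ^ (T (j:ℤ)) * q ^ (T (k:ℤ)) *
      qbinom (L - i) j * qbinom (L - j) k) * hA
    - ((1 - q ^ (L - (k:ℤ))) * q ^ (k:ℤ) * q * q ^ (T (i:ℤ)) * q ^ (T (j:ℤ)) * q ^ (T (k:ℤ)) *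
        qbinom (L - ↑k - 1) i * qbinom (L - i) j) * hB2

theorem diagonal_product_evaluation (i j k : ℕ) (L : ℤ)
    (h1 : (i : ℤ) + j ≤ L) (h2 : (j : ℤ) + k ≤ L) (h3 : (k : ℤ) + i ≤ L) :
    (∑ s ∈ Finset.range (i + 1),
      q ^ ((s : ℤ) * (L + 2) - T s + T ((i : ℤ) - s) + T ((j : ℤ) - s) + T ((k : ℤ) - s)) *
        qmul3 (L - s) s ((i : ℤ) - s) ((j : ℤ) - s) * qbinom (L - i - j) ((k : ℤ) - s)) =
      q ^ (T (i : ℤ) + T (j : ℤ) + T (k : ℤ)) *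
        qbinom (L - k) i * qbinom (L - i) j * qbinom (L - j) k := by
  revert h2 h3
  induction k with
  | zero =>
    intro h2 h3
    rw [Finset.sum_eq_single 0]
    · norm_num [T_zero, qmul3, qbinom_zero]
      ring
    · intro s hs hne
      rw [qbinom_neg (L - ↑i - ↑j) _ (by omega : ((0:ℕ):ℤ) - (s:ℤ) < 0)]
      ring
    · intro h
      exact absurd (Finset.mem_range.mpr (by omega)) h
  | succ k ih =>
    intro h2 h3
    have ih' := ih (by push_cast at h2 ⊢; omega) (by push_cast at h3 ⊢; omega)
    have hcan : ((1 - q ^ (L - (k:ℤ))) * (1 - q ^ ((k:ℤ)+1))) ≠ 0 :=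
      mul_ne_zero (one_sub_q_zpow_ne_zero _ (by push_cast at h2; omega))
        (one_sub_q_zpow_ne_zero _ (by omega))
    apply mul_left_cancel₀ hcan
    rw [Finset.mul_sum]
    have hsc : (∑ s ∈ Finset.range (i + 1), (1 - q ^ (L - (k:ℤ))) * (1 - q ^ ((k:ℤ)+1)) *
        (q ^ ((s : ℤ) * (L + 2) - T s + T ((i : ℤ) - s) + T ((j : ℤ) - s) + T (((k+1:ℕ) : ℤ) - s)) *
          qmul3 (L - s) s ((i : ℤ) - s) ((j : ℤ) - s) * qbinom (L - i - j) (((k+1:ℕ) : ℤ) - s)))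
      = ∑ s ∈ Finset.range (i + 1),
        (q ^ ((k:ℤ)+1) * ((1 - q ^ (L - k - i)) * (1 - q ^ (L - j - k))) *
          (q ^ (Ee i j k L s) * qmul3 (L - s) s ((i:ℤ) - s) ((j:ℤ) - s) *
            qbinom (L - i - j) ((k:ℤ) - s))
          + (Gb i j k L (s+1) - Gb i j k L s)) :=
      Finset.sum_congr rfl fun s _ => WZ i j k L s
    rw [hsc, Finset.sum_add_distrib, Finset.sum_range_sub (f := Gb i j k L),
      Gb_start, Gb_end, ← Finset.mul_sum]
    rw [show (∑ s ∈ Finset.range (i + 1),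
        q ^ (Ee i j k L s) * qmul3 (L - s) s ((i:ℤ) - s) ((j:ℤ) - s) *
          qbinom (L - i - j) ((k:ℤ) - s))
      = q ^ (T (i:ℤ) + T (j:ℤ) + T (k:ℤ)) * qbinom (L - k) i * qbinom (L - i) j *
          qbinom (L - j) k from ih']
    rw [sub_zero, add_zero]
    exact Rratio i j k L
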